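/- Let H be a complex Hilbert space and let T : H →L[ℂ] H be a bounded self-adjoint operator that is positive (⟪T f, f⟫ ≥ 0 for all f). Then for all 0 < s ≤ s′ the operators T + s·I and T + s′·I are invertible, and for every f ∈ H, ‖T^{1/2}((T + s′·I)⁻¹ f)‖ ≤ ‖T^{1/2}((T + s·I)⁻¹ f)‖. -/

import Mathlib

/-- Let `T` be a bounded self-adjoint positive operator on a complex Hilbert space. Then for
all `0 < s ≤ s'` the operators `T + s • 1` and `T + s' • 1` are invertible, and for every `f`,
`‖T^{1/2}((T + s' • 1)⁻¹ f)‖ ≤ ‖T^{1/2}((T + s • 1)⁻¹ f)‖`, where `T^{1/2} = cfc Real.sqrt T`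
is given by the continuous functional calculus. -/
theorem sqrt_resolvent_norm_antitone {H : Type*} [NormedAddCommGroup H]
    [InnerProductSpace ℂ H] [CompleteSpace H] (T : H →L[ℂ] H)
    (hT : IsSelfAdjoint T) (hpos : ∀ f : H, 0 ≤ (inner ℂ (T f) f : ℂ).re)
    (s s' : ℝ) (hs : 0 < s) (hss' : s ≤ s') :
    IsUnit (T + s • (1 : H →L[ℂ] H)) ∧ IsUnit (T + s' • (1 : H →L[ℂ] H)) ∧
    ∀ f : H,
      ‖cfc Real.sqrt T (Ring.inverse (T + s' • (1 : H →L[ℂ] H)) f)‖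
        ≤ ‖cfc Real.sqrt T (Ring.inverse (T + s • (1 : H →L[ℂ] H)) f)‖ := by
  have hs' : 0 < s' := lt_of_lt_of_le hs hss'
  have hT0 : (0 : H →L[ℂ] H) ≤ T := by
    rw [ContinuousLinearMap.nonneg_iff_isPositive]
    exact ⟨hT.isSymmetric, fun f => hpos f⟩
  have hspec : ∀ x ∈ spectrum ℝ T, 0 ≤ x := fun x hx => spectrum_nonneg_of_nonneg hT0 hx
  have main : ∀ r : ℝ, 0 < r → IsUnit (T + r • (1 : H →L[ℂ] H)) ∧
      Ring.inverse (T + r • (1 : H →L[ℂ] H)) = cfc (fun t : ℝ => (t + r)⁻¹) T := by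
    intro r hr
    have hne : ∀ x ∈ spectrum ℝ T, x + r ≠ 0 := fun x hx =>
      ne_of_gt (by have := hspec x hx; linarith)
    have hcont : ContinuousOn (fun t : ℝ => (t + r)⁻¹) (spectrum ℝ T) :=
      ContinuousOn.inv₀ (by fun_prop) hne
    have key : cfc (fun t : ℝ => t + r) T = T + r • (1 : H →L[ℂ] H) := by
      rw [cfc_add (a := T) (fun t : ℝ => t) (fun _ : ℝ => r) (by fun_prop) (by fun_prop),
        cfc_id' ℝ T, cfc_const r T, Algebra.algebraMap_eq_smul_one]
    have hmul1 : (T + r • (1 : H →L[ℂ] H)) * cfc (fun t : ℝ => (t + r)⁻¹) T = 1 := by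
      rw [← key, ← cfc_mul _ _ T (by fun_prop) hcont]
      calc cfc (fun t : ℝ => (t + r) * (t + r)⁻¹) T
          = cfc (fun _ : ℝ => (1:ℝ)) T := cfc_congr fun x hx => by
            field_simp [hne x hx]
        _ = 1 := cfc_const_one ℝ T
    have hmul2 : cfc (fun t : ℝ => (t + r)⁻¹) T * (T + r • (1 : H →L[ℂ] H)) = 1 := by
      rw [← key, ← cfc_mul _ _ T hcont (by fun_prop)]
      calc cfc (fun t : ℝ => (t + r)⁻¹ * (t + r)) T
          = cfc (fun _ : ℝ => (1:ℝ)) T := cfc_congr fun x hx => by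
            field_simp [hne x hx]
        _ = 1 := cfc_const_one ℝ T
    exact ⟨(Units.mk (T + r • 1) (cfc (fun t : ℝ => (t + r)⁻¹) T) hmul1 hmul2).isUnit,
      Ring.inverse_unit (Units.mk (T + r • 1) (cfc (fun t : ℝ => (t + r)⁻¹) T) hmul1 hmul2)⟩
  refine ⟨(main s hs).1, (main s' hs').1, fun f => ?_⟩
  have hcontr : ∀ r : ℝ, 0 < r → ContinuousOn (fun t : ℝ => (t + r)⁻¹) (spectrum ℝ T) := by
    intro r hr
    exact ContinuousOn.inv₀ (by fun_prop) fun x hx =>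
      ne_of_gt (by have := hspec x hx; linarith)
  have comp : ∀ r : ℝ, 0 < r →
      cfc Real.sqrt T (Ring.inverse (T + r • (1 : H →L[ℂ] H)) f)
        = cfc (fun t : ℝ => Real.sqrt t * (t + r)⁻¹) T f := by
    intro r hr
    rw [(main r hr).2, ← ContinuousLinearMap.mul_apply,
      ← cfc_mul _ _ T (Real.continuous_sqrt.continuousOn) (hcontr r hr)]
  rw [comp s hs, comp s' hs']
  set g : ℝ → ℝ := fun t => Real.sqrt t * (t + s)⁻¹ with hg_def
  set g' : ℝ → ℝ := fun t => Real.sqrt t * (t + s')⁻¹ with hg'_def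
  have hgc : ContinuousOn g (spectrum ℝ T) :=
    Real.continuous_sqrt.continuousOn.mul (hcontr s hs)
  have hg'c : ContinuousOn g' (spectrum ℝ T) :=
    Real.continuous_sqrt.continuousOn.mul (hcontr s' hs')
  have normsq : ∀ (h : ℝ → ℝ), ContinuousOn h (spectrum ℝ T) →
      ‖cfc h T f‖ ^ 2 = (inner ℂ (cfc (fun t => h t * h t) T f) f : ℂ).re := by
    intro h hc
    have hsa : IsSelfAdjoint (cfc h T) := cfc_predicate h T
    have key : (inner ℂ (cfc (fun t => h t * h t) T f) f : ℂ)
        = inner ℂ (cfc h T f) (cfc h T f) := by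
      calc (inner ℂ (cfc (fun t => h t * h t) T f) f : ℂ)
          = inner ℂ ((cfc h T) ((cfc h T) f)) f := by
            rw [cfc_mul _ _ T hc hc, ContinuousLinearMap.mul_apply]
        _ = inner ℂ ((ContinuousLinearMap.adjoint (cfc h T)) ((cfc h T) f)) f := by
            rw [hsa.adjoint_eq]
        _ = inner ℂ (cfc h T f) (cfc h T f) :=
            ContinuousLinearMap.adjoint_inner_left _ _ _
    rw [key]
    exact ((inner_self_eq_norm_sq (𝕜 := ℂ) _)).symm
  have hsq : ‖cfc g' T f‖ ^ 2 ≤ ‖cfc g T f‖ ^ 2 := by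
    rw [normsq g' hg'c, normsq g hgc]
    have hle : cfc (fun t => g' t * g' t) T ≤ cfc (fun t => g t * g t) T := by
      refine cfc_mono (fun x hx => ?_) (hg'c.mul hg'c) (hgc.mul hgc)
      have hx0 := hspec x hx
      have h1 : (0:ℝ) < x + s := by linarith
      have h2 : g' x ≤ g x := by
        apply mul_le_mul_of_nonneg_left _ (Real.sqrt_nonneg x)
        exact inv_anti₀ h1 (by linarith)
      have h3 : 0 ≤ g' x := mul_nonneg (Real.sqrt_nonneg x) (by positivity)
      exact mul_le_mul h2 h2 h3 (le_trans h3 h2)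
    have hp := (ContinuousLinearMap.nonneg_iff_isPositive _).mp (sub_nonneg.mpr hle)
    have h4 := hp.inner_nonneg_left f
    simp only [ContinuousLinearMap.reApplyInnerSelf, ContinuousLinearMap.sub_apply,
      inner_sub_left, map_sub, RCLike.re_to_complex] at h4
    rw [Complex.le_def, Complex.zero_re, Complex.sub_re] at h4
    linarith [h4.1]
  calc ‖cfc g' T f‖ = Real.sqrt (‖cfc g' T f‖ ^ 2) := (Real.sqrt_sq (norm_nonneg _)).symm
    _ ≤ Real.sqrt (‖cfc g T f‖ ^ 2) := Real.sqrt_le_sqrt hsq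
    _ = ‖cfc g T f‖ := Real.sqrt_sq (norm_nonneg _)
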